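/- Let k ≥ 1 and let t_1,...,t_k, s_1, s_2 be complex numbers such that s_1, s_2, t_1, ..., t_k are pairwise distinct. Then the symmetrization over all permutations π of {1,...,k} of 1/((s_1 - t_{π(1)})(t_{π(1)} - t_{π(2)})···(t_{π(k-1)} - t_{π(k)})(t_{π(k)} - s_2)) equals (-1)^k (s_1 - s_2)^{k-1} / (∏_{j=1}^k (s_1 - t_j) · ∏_{j=1}^k (s_2 - t_j)). -/

import Mathlib

open Finset Polynomial

private lemma prod_erase_reindex {m : ℕ} {i : Fin (m + 1)} {g : Fin m → Fin (m + 1)}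
    (hg : Function.Injective g) (hgi : ∀ x, g x ≠ i)
    (hsurj : ∀ j, j ≠ i → ∃ x, g x = j) (f : Fin (m + 1) → ℂ) :
    ∏ x, f (g x) = ∏ j ∈ Finset.univ.erase i, f j := by
  refine Finset.prod_nbij g (fun a _ => Finset.mem_erase.mpr ⟨hgi a, Finset.mem_univ _⟩)
    (fun a _ b _ h => hg h) ?_ (fun a _ => rfl)
  intro j hj
  obtain ⟨x, hx⟩ := hsurj j (Finset.mem_erase.mp (Finset.mem_coe.mp hj)).1
  exact ⟨x, Finset.mem_coe.mpr (Finset.mem_univ x), hx⟩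

private lemma prod_swap_succ {m : ℕ} (p : Fin (m + 1)) (f : Fin (m + 1) → ℂ) :
    ∏ x : Fin m, f (Equiv.swap 0 p x.succ) = ∏ j ∈ Finset.univ.erase p, f j := by
  refine prod_erase_reindex ((Equiv.injective _).comp (Fin.succ_injective _)) ?_ ?_ f
  · intro x h
    have h0 : Equiv.swap 0 p (0 : Fin (m+1)) = p := Equiv.swap_apply_left 0 p
    exact Fin.succ_ne_zero x ((Equiv.swap 0 p).injective (h.trans h0.symm))
  · intro j hj
    have hy : Equiv.swap 0 p j ≠ 0 := by
      intro h
      apply hj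
      have := congrArg (Equiv.swap 0 p) h
      rwa [Equiv.swap_apply_self, Equiv.swap_apply_left] at this
    obtain ⟨x, hx⟩ := Fin.exists_succ_eq.mpr hy
    refine ⟨x, ?_⟩
    show Equiv.swap 0 p x.succ = j
    rw [hx, Equiv.swap_apply_self]

private lemma lagrange_sum_zero {m : ℕ} (v : Fin (m + 2) → ℂ) (hv : Function.Injective v)
    (P : Polynomial ℂ) (hdeg : P.degree < (m + 1 : ℕ)) :
    ∑ i, P.eval (v i) / ∏ j ∈ Finset.univ.erase i, (v i - v j) = 0 := by
  have hvs : Set.InjOn v (Finset.univ : Finset (Fin (m + 2))) := hv.injOn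
  have hcard : (Finset.univ : Finset (Fin (m + 2))).card = m + 2 := by simp
  have hdeg2 : P.degree < ((Finset.univ : Finset (Fin (m + 2))).card : ℕ) := by
    rw [hcard]
    exact hdeg.trans_le (by exact_mod_cast Nat.le_succ (m + 1))
  have hP := Lagrange.eq_interpolate hvs hdeg2
  calc ∑ i, P.eval (v i) / ∏ j ∈ Finset.univ.erase i, (v i - v j)
      = ∑ i, (Polynomial.C (P.eval (v i)) * Lagrange.basis Finset.univ v i).coeff (m + 1) := by
        refine Finset.sum_congr rfl fun i _ => ?_
        have hb : (Lagrange.basis Finset.univ v i).natDegree = m + 1 := by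
          rw [Lagrange.natDegree_basis hvs (Finset.mem_univ i), hcard]
          omega
        have hl : (Lagrange.basis Finset.univ v i).leadingCoeff
            = ∏ j ∈ Finset.univ.erase i, (v i - v j)⁻¹ := by
          rw [Lagrange.basis, Polynomial.leadingCoeff_prod]
          refine Finset.prod_congr rfl fun j _ => ?_
          rw [Lagrange.basisDivisor, Polynomial.leadingCoeff_mul, Polynomial.leadingCoeff_C,
            Polynomial.leadingCoeff_X_sub_C, mul_one]
        rw [Polynomial.coeff_C_mul, ← hb, Polynomial.coeff_natDegree, hl,
          Finset.prod_inv_distrib, ← div_eq_mul_inv]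
      _ = (Lagrange.interpolate Finset.univ v fun i => P.eval (v i)).coeff (m + 1) := by
        rw [Lagrange.interpolate_apply, Polynomial.finset_sum_coeff]
      _ = P.coeff (m + 1) := by rw [← hP]
      _ = 0 := Polynomial.coeff_eq_zero_of_degree_lt hdeg

private lemma key_sum {m : ℕ} (t : Fin (m + 1) → ℂ) (s₁ s₂ : ℂ)
    (ht : Function.Injective t) (hs₁ : ∀ j, s₁ ≠ t j) :
    ∑ p, (t p - s₂) ^ m / ((s₁ - t p) * ∏ j ∈ Finset.univ.erase p, (t p - t j))
      = (s₁ - s₂) ^ m / ∏ j, (s₁ - t j) := by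
  set v : Fin (m + 2) → ℂ := Fin.snoc t s₁ with hvdef
  have hvc : ∀ q : Fin (m + 1), v q.castSucc = t q := fun q => by simp [hvdef]
  have hvl : v (Fin.last (m + 1)) = s₁ := by simp [hvdef]
  have hvinj : Function.Injective v := by
    intro a b hab
    induction a using Fin.lastCases with
    | last =>
      induction b using Fin.lastCases with
      | last => rfl
      | cast q => rw [hvl, hvc] at hab; exact absurd hab (hs₁ q)
    | cast q =>
      induction b using Fin.lastCases with
      | last => rw [hvl, hvc] at hab; exact absurd hab.symm (hs₁ q)
      | cast q' => rw [hvc, hvc] at hab; rw [ht hab]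
  have hdeg : ((X - C s₂) ^ m : Polynomial ℂ).degree < ((m + 1 : ℕ) : WithBot ℕ) := by
    rw [Polynomial.degree_pow, Polynomial.degree_X_sub_C]
    rw [show (m • (1 : WithBot ℕ)) = (m : WithBot ℕ) by simp]
    exact_mod_cast Nat.lt_succ_self m
  have H := lagrange_sum_zero v hvinj ((X - C s₂) ^ m) hdeg
  rw [Fin.sum_univ_castSucc] at H
  have hlast : ∏ j ∈ Finset.univ.erase (Fin.last (m + 1)), (v (Fin.last (m + 1)) - v j)
      = ∏ j, (s₁ - t j) := by
    rw [← prod_erase_reindex (i := Fin.last (m + 1)) (g := Fin.castSucc)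
      (Fin.castSucc_injective _) (fun x => (Fin.castSucc_lt_last x).ne)
      (fun j hj => Fin.exists_castSucc_eq.mpr hj)]
    exact Finset.prod_congr rfl fun q _ => by rw [hvl, hvc]
  have hpe : ∀ p : Fin (m + 1), ∏ j ∈ Finset.univ.erase (Fin.castSucc p), (v (Fin.castSucc p) - v j)
      = (t p - s₁) * ∏ j ∈ Finset.univ.erase p, (t p - t j) := by
    intro p
    have hgne : ∀ x : Fin (m + 1),
        (if x = p then Fin.last (m + 1) else Fin.castSucc x) ≠ Fin.castSucc p := by
      intro x
      by_cases h : x = p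
      · simp only [h, if_pos rfl]
        exact fun hc => absurd hc.symm (Fin.castSucc_lt_last p).ne
      · simp only [if_neg h]
        exact fun hc => h (Fin.castSucc_injective _ hc)
    have hginj : Function.Injective
        (fun x : Fin (m + 1) => if x = p then Fin.last (m + 1) else Fin.castSucc x) := by
      intro a b hab
      by_cases ha : a = p <;> by_cases hb : b = p <;>
        simp only [ha, hb, if_pos rfl, if_neg, ite_true, ite_false] at hab ⊢
      · exact absurd hab.symm (Fin.castSucc_lt_last b).ne
      · exact absurd hab (Fin.castSucc_lt_last a).ne
      · exact Fin.castSucc_injective _ hab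
    have hgsurj : ∀ j : Fin (m + 2), j ≠ Fin.castSucc p →
        ∃ x, (if x = p then Fin.last (m + 1) else Fin.castSucc x) = j := by
      intro j hj
      by_cases hl : j = Fin.last (m + 1)
      · exact ⟨p, by simp [hl]⟩
      · obtain ⟨q, hq⟩ := Fin.exists_castSucc_eq.mpr hl
        have hqp : q ≠ p := fun h => hj (by rw [← hq, h])
        exact ⟨q, by simp [hqp, hq]⟩
    rw [← prod_erase_reindex hginj hgne hgsurj (fun j => v (Fin.castSucc p) - v j)]
    rw [← Finset.mul_prod_erase Finset.univ _ (Finset.mem_univ p)]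
    congr 1
    · simp [hvl, hvc]
    · refine Finset.prod_congr rfl fun x hx => ?_
      rw [if_neg (Finset.mem_erase.mp hx).1, hvc, hvc]
  have heval : ∀ x : ℂ, Polynomial.eval x ((X - C s₂) ^ m : Polynomial ℂ) = (x - s₂) ^ m := by
    intro x; simp
  rw [hlast, hvl, heval] at H
  have H2 : (∑ p : Fin (m + 1),
      (t p - s₂) ^ m / ((t p - s₁) * ∏ j ∈ Finset.univ.erase p, (t p - t j)))
      + (s₁ - s₂) ^ m / ∏ j, (s₁ - t j) = 0 := by
    rw [← H]
    congr 1
    refine Finset.sum_congr rfl fun p _ => ?_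
    rw [hpe p, hvc, heval]
  have H3 : ∀ p : Fin (m + 1),
      (t p - s₂) ^ m / ((s₁ - t p) * ∏ j ∈ Finset.univ.erase p, (t p - t j))
      = -((t p - s₂) ^ m / ((t p - s₁) * ∏ j ∈ Finset.univ.erase p, (t p - t j))) := by
    intro p
    rw [show s₁ - t p = -(t p - s₁) by ring, neg_mul, div_neg]
  rw [Finset.sum_congr rfl fun p _ => H3 p, Finset.sum_neg_distrib]
  linear_combination -H2

/-- Identity (I): symmetrization of the chain product with endpoints `s₁` and `s₂`. -/
theorem identity_I (n : ℕ) (t : Fin (n + 1) → ℂ) (s₁ s₂ : ℂ)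
    (ht : Function.Injective t) (hs₁ : ∀ j, s₁ ≠ t j) (hs₂ : ∀ j, s₂ ≠ t j)
    (hs : s₁ ≠ s₂) :
    ∑ π : Equiv.Perm (Fin (n + 1)),
      1 / ((s₁ - t (π 0)) *
        (∏ i : Fin n, (t (π i.castSucc) - t (π i.succ))) *
        (t (π (Fin.last n)) - s₂))
    = (-1) ^ (n + 1) * (s₁ - s₂) ^ n /
        ((∏ j, (s₁ - t j)) * ∏ j, (s₂ - t j)) := by
  induction n generalizing s₁ with
  | zero =>
    have hone : ∀ b : Equiv.Perm (Fin 1), b = 1 := by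
      intro b
      refine Equiv.ext fun x => ?_
      have h1 := (b x).isLt
      have h2 := x.isLt
      exact Fin.ext (by omega)
    rw [Finset.sum_eq_single_of_mem (1 : Equiv.Perm (Fin 1)) (Finset.mem_univ _)
      (fun b _ hb => absurd (hone b) hb)]
    have h1 : s₁ - t 0 ≠ 0 := sub_ne_zero.mpr (hs₁ 0)
    have h2 : t 0 - s₂ ≠ 0 := sub_ne_zero.mpr fun h => hs₂ 0 h.symm
    have h3 : s₂ - t 0 ≠ 0 := sub_ne_zero.mpr (hs₂ 0)
    simp only [Equiv.Perm.one_apply, pow_zero, pow_one]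
    rw [show (Fin.last 0) = 0 from rfl, Fin.prod_univ_zero, Fin.prod_univ_one,
      Fin.prod_univ_one]
    field_simp
    ring
  | succ n ih =>
    calc ∑ π : Equiv.Perm (Fin (n + 2)),
        1 / ((s₁ - t (π 0)) *
          (∏ i : Fin (n + 1), (t (π i.castSucc) - t (π i.succ))) *
          (t (π (Fin.last (n + 1))) - s₂))
        = ∑ x : Fin (n + 2) × Equiv.Perm (Fin (n + 1)),
            1 / ((s₁ - t (Equiv.Perm.decomposeFin.symm x 0)) *
              (∏ i : Fin (n + 1), (t (Equiv.Perm.decomposeFin.symm x i.castSucc)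
                - t (Equiv.Perm.decomposeFin.symm x i.succ))) *
              (t (Equiv.Perm.decomposeFin.symm x (Fin.last (n + 1))) - s₂)) := by
          exact (Equiv.sum_comp Equiv.Perm.decomposeFin.symm _).symm
      _ = ∑ p : Fin (n + 2), ∑ e : Equiv.Perm (Fin (n + 1)),
            1 / ((s₁ - t (Equiv.Perm.decomposeFin.symm (p, e) 0)) *
              (∏ i : Fin (n + 1), (t (Equiv.Perm.decomposeFin.symm (p, e) i.castSucc)
                - t (Equiv.Perm.decomposeFin.symm (p, e) i.succ))) *
              (t (Equiv.Perm.decomposeFin.symm (p, e) (Fin.last (n + 1))) - s₂)) := by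
          exact Fintype.sum_prod_type _
      _ = ∑ p : Fin (n + 2), 1 / (s₁ - t p) * ((-1) ^ (n + 1) * (t p - s₂) ^ n /
            ((∏ j ∈ Finset.univ.erase p, (t p - t j)) *
              ∏ j ∈ Finset.univ.erase p, (s₂ - t j))) := by
          refine Finset.sum_congr rfl fun p _ => ?_
          have huinj : Function.Injective (fun x : Fin (n + 1) => t (Equiv.swap 0 p x.succ)) :=
            fun a b h => Fin.succ_injective _ ((Equiv.swap 0 p).injective (ht h))
          have h1 : ∀ x : Fin (n + 1), t p ≠ t (Equiv.swap 0 p x.succ) := by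
            intro x h
            have h' : p = Equiv.swap 0 p x.succ := ht h
            rw [show p = Equiv.swap 0 p 0 from (Equiv.swap_apply_left 0 p).symm] at h'
            exact Fin.succ_ne_zero x ((Equiv.swap 0 p).injective h').symm
          have h2 : ∀ x : Fin (n + 1), s₂ ≠ t (Equiv.swap 0 p x.succ) := fun x => hs₂ _
          have h3 : t p ≠ s₂ := Ne.symm (hs₂ p)
          have ihp := ih (fun x : Fin (n + 1) => t (Equiv.swap 0 p x.succ)) (t p)
            huinj h1 h2 h3
          have hA : ∏ x : Fin (n + 1), (t p - t (Equiv.swap 0 p x.succ))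
              = ∏ j ∈ Finset.univ.erase p, (t p - t j) := prod_swap_succ p fun j => t p - t j
          have hB : ∏ x : Fin (n + 1), (s₂ - t (Equiv.swap 0 p x.succ))
              = ∏ j ∈ Finset.univ.erase p, (s₂ - t j) := prod_swap_succ p fun j => s₂ - t j
          calc ∑ e : Equiv.Perm (Fin (n + 1)),
              1 / ((s₁ - t (Equiv.Perm.decomposeFin.symm (p, e) 0)) *
                (∏ i : Fin (n + 1), (t (Equiv.Perm.decomposeFin.symm (p, e) i.castSucc)
                  - t (Equiv.Perm.decomposeFin.symm (p, e) i.succ))) *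
                (t (Equiv.Perm.decomposeFin.symm (p, e) (Fin.last (n + 1))) - s₂))
              = ∑ e : Equiv.Perm (Fin (n + 1)), 1 / (s₁ - t p) *
                (1 / ((t p - t (Equiv.swap 0 p ((e 0).succ))) *
                  (∏ i : Fin n, (t (Equiv.swap 0 p ((e i.castSucc).succ))
                    - t (Equiv.swap 0 p ((e i.succ).succ)))) *
                  (t (Equiv.swap 0 p ((e (Fin.last n)).succ)) - s₂))) := by
                refine Finset.sum_congr rfl fun e _ => ?_
                rw [Fin.prod_univ_succ]
                simp only [Fin.castSucc_zero, ← Fin.succ_castSucc, ← Fin.succ_last,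
                  Equiv.Perm.decomposeFin_symm_apply_zero,
                  Equiv.Perm.decomposeFin_symm_apply_succ]
                rw [mul_assoc (s₁ - t p), div_mul_div_comm, one_mul]
            _ = 1 / (s₁ - t p) * ∑ e : Equiv.Perm (Fin (n + 1)),
                1 / ((t p - t (Equiv.swap 0 p ((e 0).succ))) *
                  (∏ i : Fin n, (t (Equiv.swap 0 p ((e i.castSucc).succ))
                    - t (Equiv.swap 0 p ((e i.succ).succ)))) *
                  (t (Equiv.swap 0 p ((e (Fin.last n)).succ)) - s₂)) := by
                rw [← Finset.mul_sum]
            _ = 1 / (s₁ - t p) * ((-1) ^ (n + 1) * (t p - s₂) ^ n /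
                ((∏ x : Fin (n + 1), (t p - t (Equiv.swap 0 p x.succ))) *
                  ∏ x : Fin (n + 1), (s₂ - t (Equiv.swap 0 p x.succ)))) := by
                exact congrArg (fun z => 1 / (s₁ - t p) * z) ihp
            _ = 1 / (s₁ - t p) * ((-1) ^ (n + 1) * (t p - s₂) ^ n /
                ((∏ j ∈ Finset.univ.erase p, (t p - t j)) *
                  ∏ j ∈ Finset.univ.erase p, (s₂ - t j))) := by
                rw [hA, hB]
      _ = (-1) ^ (n + 1 + 1) * (s₁ - s₂) ^ (n + 1) /
            ((∏ j, (s₁ - t j)) * ∏ j, (s₂ - t j)) := by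
          have hKey := key_sum t s₁ s₂ ht hs₁ (m := n + 1)
          have hterm : ∀ p : Fin (n + 2),
              1 / (s₁ - t p) * ((-1) ^ (n + 1) * (t p - s₂) ^ n /
                ((∏ j ∈ Finset.univ.erase p, (t p - t j)) *
                  ∏ j ∈ Finset.univ.erase p, (s₂ - t j)))
              = ((-1) ^ (n + 1 + 1) / ∏ j, (s₂ - t j)) *
                ((t p - s₂) ^ (n + 1) /
                  ((s₁ - t p) * ∏ j ∈ Finset.univ.erase p, (t p - t j))) := by
            intro p
            have hC : s₁ - t p ≠ 0 := sub_ne_zero.mpr (hs₁ p)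
            have hD2 : s₂ - t p ≠ 0 := sub_ne_zero.mpr (hs₂ p)
            have hE : ∏ j ∈ Finset.univ.erase p, (t p - t j) ≠ 0 :=
              Finset.prod_ne_zero_iff.mpr fun j hj =>
                sub_ne_zero.mpr fun h => (Finset.mem_erase.mp hj).1 (ht h.symm)
            have hBne : ∏ j ∈ Finset.univ.erase p, (s₂ - t j) ≠ 0 :=
              Finset.prod_ne_zero_iff.mpr fun j _ => sub_ne_zero.mpr (hs₂ j)
            rw [show ∏ j, (s₂ - t j) = (s₂ - t p) * ∏ j ∈ Finset.univ.erase p, (s₂ - t j)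
              from (Finset.mul_prod_erase _ _ (Finset.mem_univ p)).symm]
            field_simp
            ring
          rw [Finset.sum_congr rfl fun p _ => hterm p, ← Finset.mul_sum, hKey,
            div_mul_div_comm,
            mul_comm (∏ j : Fin (n + 1 + 1), (s₂ - t j)) (∏ j : Fin (n + 1 + 1), (s₁ - t j))]
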